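/- Let β ∈ ℂ with |β| > 1 and μ normalized Lebesgue measure on 𝕋. Every solution φ ∈ H₀ (the closed span of {z^{-s} : s ≥ 0} in L²(𝕋,μ)) of the equation φ − β P(zφ | H₀) = 1 is of the form φ = ∑_{s=0}^∞ β^{-s} z^{-s} (ψ − β^{-1} z^{-1}) for some constant ψ ∈ ℂ, and conversely every such φ is a solution. In particular, the solution set is a one-dimensional affine subspace of H₀. -/

import Mathlib

open MeasureTheory Filter Complex Topology
open scoped Real ENNReal

noncomputable section

instance : Fact (0 < 2 * Real.pi) := ⟨by positivity⟩

local notation "𝕋" => AddCircle (2 * Real.pi)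

/-- The normalized Haar (Lebesgue) measure on the circle. -/
abbrev μH : Measure 𝕋 := AddCircle.haarAddCircle

/-- The Hardy-type space `H₀`: the closed span in `L²(𝕋, μ)` of the functions
`z ↦ z^{-s}`, `s ≥ 0`. -/
def Hardy : Submodule ℂ (Lp ℂ 2 μH) :=
  (Submodule.span ℂ (Set.range fun s : ℕ => fourierLp 2 (-(s : ℤ)))).topologicalClosure

instance : CompleteSpace Hardy :=
  (Submodule.isClosed_topologicalClosure _).completeSpace_coe

/-- The candidate Cagan solution `∑_{s≥0} β^{-s} z^{-s} (ψ − β⁻¹ z⁻¹)`. -/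
def caganSol (β ψ : ℂ) : 𝕋 → ℂ :=
  fun x => ∑' s : ℕ, β⁻¹ ^ s * fourier (-(s : ℤ)) x * (ψ - β⁻¹ * fourier (-1) x)

namespace CaganAux

local notation "⟪" x ", " y "⟫" => @inner ℂ _ _ x y

variable (β : ℂ)

lemma hr (hβ : 1 < ‖β‖) : ‖β⁻¹‖ < 1 := by
  rw [norm_inv]
  exact inv_lt_one_of_one_lt₀ hβ

lemma beta_ne (hβ : 1 < ‖β‖) : β ≠ 0 := by
  intro h
  rw [h, norm_zero] at hβ
  linarith

lemma summable_coef (hβ : 1 < ‖β‖) : Summable (fun n : ℕ => ‖β⁻¹ ^ n‖) := by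
  simpa [norm_pow] using summable_geometric_of_lt_one (norm_nonneg β⁻¹) (hr β hβ)

lemma norm_fourier_apply (n : ℤ) (x : 𝕋) : ‖fourier n x‖ = 1 := by
  rw [fourier_apply, Circle.norm_coe]

lemma summable_Gc (hβ : 1 < ‖β‖) :
    Summable (fun n : ℕ => β⁻¹ ^ n • (fourier (-(n : ℤ)) : C(𝕋, ℂ))) := by
  apply Summable.of_norm
  have h : ∀ n : ℕ, ‖β⁻¹ ^ n • (fourier (-(n : ℤ)) : C(𝕋, ℂ))‖ = ‖β⁻¹ ^ n‖ := by
    intro n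
    rw [norm_smul, fourier_norm, mul_one]
  rw [funext h]
  exact summable_coef β hβ

/-- The geometric series `∑ β⁻ⁿ z⁻ⁿ` as a continuous function. -/
def Gc : C(𝕋, ℂ) := ∑' n : ℕ, β⁻¹ ^ n • (fourier (-(n : ℤ)) : C(𝕋, ℂ))

lemma hasSum_Gc (hβ : 1 < ‖β‖) :
    HasSum (fun n : ℕ => β⁻¹ ^ n • (fourier (-(n : ℤ)) : C(𝕋, ℂ))) (Gc β) :=
  (summable_Gc β hβ).hasSum

lemma hasSum_Gc_apply (hβ : 1 < ‖β‖) (x : 𝕋) :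
    HasSum (fun n : ℕ => β⁻¹ ^ n * fourier (-(n : ℤ)) x) (Gc β x) := by
  have h := (hasSum_Gc β hβ).mapL (ContinuousMap.evalCLM (R := ℂ) x)
  have he : ∀ f : C(𝕋, ℂ), ContinuousMap.evalCLM (R := ℂ) x f = f x := fun f => rfl
  simpa [he, ContinuousMap.smul_apply, smul_eq_mul] using h

/-- The geometric series as an `L²` element. -/
def Gl : Lp ℂ 2 μH := ContinuousMap.toLp 2 μH ℂ (Gc β)

lemma coeFn_Gl : ⇑(Gl β) =ᵐ[μH] ⇑(Gc β) := ContinuousMap.coeFn_toLp μH (Gc β)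

lemma hasSum_Gl (hβ : 1 < ‖β‖) :
    HasSum (fun n : ℕ => β⁻¹ ^ n • fourierLp 2 (-(n : ℤ))) (Gl β) := by
  have h := (hasSum_Gc β hβ).mapL (ContinuousMap.toLp (E := ℂ) 2 μH ℂ)
  simpa [_root_.map_smul, fourierLp, Gl] using h

lemma mem_Hardy_fourierLp (n : ℕ) : fourierLp 2 (-(n : ℤ)) ∈ Hardy :=
  Submodule.le_topologicalClosure _ (Submodule.subset_span ⟨n, rfl⟩)

lemma mem_Hardy_fourierLp' {k : ℤ} (hk : k ≤ 0) : fourierLp 2 k ∈ Hardy := by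
  have h : k = -((-k).toNat : ℤ) := by omega
  rw [h]
  exact mem_Hardy_fourierLp _

lemma Gl_mem (hβ : 1 < ‖β‖) : Gl β ∈ Hardy := by
  refine (Submodule.isClosed_topologicalClosure _).mem_of_tendsto
    (hasSum_Gl β hβ).tendsto_sum_nat (Eventually.of_forall fun s => ?_)
  exact Submodule.sum_mem _ fun n _ => Submodule.smul_mem _ _ (mem_Hardy_fourierLp n)

lemma inner_ff (m n : ℤ) : ⟪(fourierLp 2 m : Lp ℂ 2 μH), fourierLp 2 n⟫ = if m = n then (1 : ℂ) else 0 := by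
  have h : Orthonormal ℂ (fourierLp (T := 2 * Real.pi) 2) := orthonormal_fourier
  rw [orthonormal_iff_ite] at h
  exact h m n

lemma fourierLp_mem_orthogonal {k : ℤ} (hk : 0 < k) : fourierLp 2 k ∈ Hardyᗮ := by
  rw [Submodule.mem_orthogonal']
  intro u hu
  have hker : Hardy ≤ LinearMap.ker ((innerSL ℂ (fourierLp 2 k) : Lp ℂ 2 μH →L[ℂ] ℂ) : Lp ℂ 2 μH →ₗ[ℂ] ℂ) := by
    apply Submodule.topologicalClosure_minimal
    · rw [Submodule.span_le]
      rintro _ ⟨s, rfl⟩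
      simp only [SetLike.mem_coe, LinearMap.mem_ker, ContinuousLinearMap.coe_coe, innerSL_apply_apply]
      rw [inner_ff, if_neg (by omega)]
    · exact ContinuousLinearMap.isClosed_ker _
  have h := hker hu
  rw [LinearMap.mem_ker] at h
  exact h

lemma inner_pos_eq_zero {k : ℤ} (hk : 0 < k) {u : Lp ℂ 2 μH} (hu : u ∈ Hardy) :
    ⟪fourierLp 2 k, u⟫ = 0 :=
  (Submodule.mem_orthogonal' _ _).mp (fourierLp_mem_orthogonal hk) u hu

lemma inner_Gl_neg (hβ : 1 < ‖β‖) (n : ℕ) :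
    ⟪fourierLp 2 (-(n : ℤ)), Gl β⟫ = β⁻¹ ^ n := by
  have h := (hasSum_Gl β hβ).mapL (innerSL ℂ (fourierLp 2 (-(n : ℤ))))
  have h2 : HasSum (fun m : ℕ => if m = n then β⁻¹ ^ n else (0 : ℂ)) (β⁻¹ ^ n) :=
    hasSum_ite_eq n _
  have hfe : (fun m : ℕ => (innerSL ℂ (fourierLp 2 (-(n : ℤ)) : Lp ℂ 2 μH)) (β⁻¹ ^ m • fourierLp 2 (-(m : ℤ))))
      = fun m : ℕ => if m = n then β⁻¹ ^ n else 0 := by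
    funext m
    rw [innerSL_apply_apply, inner_smul_right, inner_ff]
    by_cases hmn : m = n
    · subst hmn; simp
    · rw [if_neg (by omega), if_neg hmn, mul_zero]
  rw [hfe] at h
  exact h.unique h2

/-- The candidate solution as an `L²` element. -/
def Phi (ψ : ℂ) : Lp ℂ 2 μH := (ψ - 1) • Gl β + fourierLp 2 0

lemma Phi_mem (hβ : 1 < ‖β‖) (ψ : ℂ) : Phi β ψ ∈ Hardy := by
  refine Submodule.add_mem _ (Submodule.smul_mem _ _ (Gl_mem β hβ)) ?_
  exact mem_Hardy_fourierLp' le_rfl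

lemma caganSol_eq (hβ : 1 < ‖β‖) (ψ : ℂ) (x : 𝕋) :
    caganSol β ψ x = (ψ - 1) * Gc β x + 1 := by
  set c : ℕ → ℂ := fun s => β⁻¹ ^ s * fourier (-(s : ℤ)) x with hc
  have hC : HasSum c (Gc β x) := hasSum_Gc_apply β hβ x
  have hc0 : c 0 = 1 := by simp [hc]
  have hshift : HasSum (fun s : ℕ => c (s + 1)) (Gc β x - 1) := by
    refine (hasSum_nat_add_iff 1).mpr ?_
    simpa [Finset.sum_range_one, hc0] using hC
  have key : ∀ s : ℕ, β⁻¹ ^ s * fourier (-(s : ℤ)) x * (ψ - β⁻¹ * fourier (-1) x)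
      = ψ * c s - c (s + 1) := by
    intro s
    have hf : fourier (-((s : ℤ) + 1)) x = fourier (-(s : ℤ)) x * fourier (-1) x := by
      rw [show -((s : ℤ) + 1) = -(s : ℤ) + -1 by ring, fourier_add]
    simp only [hc]
    push_cast
    rw [hf]
    ring
  have hS : HasSum (fun s : ℕ => ψ * c s - c (s + 1)) (ψ * Gc β x - (Gc β x - 1)) :=
    (hC.mul_left ψ).sub hshift
  have : caganSol β ψ x = ∑' s : ℕ, (ψ * c s - c (s + 1)) := by
    rw [caganSol]
    exact tsum_congr key
  rw [this, hS.tsum_eq]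
  ring

lemma coeFn_Phi (hβ : 1 < ‖β‖) (ψ : ℂ) : ⇑(Phi β ψ) =ᵐ[μH] caganSol β ψ := by
  filter_upwards [Lp.coeFn_add ((ψ - 1) • Gl β) (fourierLp 2 0),
    Lp.coeFn_smul (ψ - 1) (Gl β), coeFn_Gl β, coeFn_fourierLp 2 0] with x h1 h2 h3 h4
  have : (Phi β ψ : 𝕋 → ℂ) x = ((ψ - 1) • Gl β) x + (fourierLp 2 0 : 𝕋 → ℂ) x := h1
  rw [this, h2, Pi.smul_apply, h3, h4, caganSol_eq β hβ ψ x, smul_eq_mul, fourier_zero]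

lemma fourier_mul_Gc (hβ : 1 < ‖β‖) (x : 𝕋) :
    fourier 1 x * Gc β x = fourier 1 x + β⁻¹ * Gc β x := by
  set c : ℕ → ℂ := fun s => β⁻¹ ^ s * fourier (-(s : ℤ)) x with hc
  have hC : HasSum c (Gc β x) := hasSum_Gc_apply β hβ x
  set d : ℕ → ℂ := fun s => β⁻¹ ^ s * fourier (1 - (s : ℤ)) x with hd
  have hd0 : d 0 = fourier 1 x := by simp [hd]
  have hstep : ∀ s : ℕ, d (s + 1) = β⁻¹ * c s := by
    intro s
    simp only [hd, hc]
    push_cast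
    rw [show (1 : ℤ) - ((s : ℤ) + 1) = -(s : ℤ) by ring]
    ring
  have hshift : HasSum (fun s : ℕ => d (s + 1)) (β⁻¹ * Gc β x) := by
    rw [funext hstep]
    exact hC.mul_left β⁻¹
  have hD : HasSum d (β⁻¹ * Gc β x + d 0) := by
    have h := (hasSum_nat_add_iff (f := d) 1).mp hshift
    simpa [Finset.sum_range_one] using h
  have hD2 : HasSum d (fourier 1 x * Gc β x) := by
    have : ∀ s : ℕ, fourier 1 x * c s = d s := by
      intro s
      simp only [hd, hc]
      rw [show (1 : ℤ) - (s : ℤ) = 1 + -(s : ℤ) by ring, fourier_add]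
      ring
    rw [← funext this]
    exact hC.mul_left _
  rw [hD2.unique hD, hd0]
  ring

lemma inner_eq_integral (f : Lp ℂ 2 μH) (k : ℤ) :
    ⟪(fourierLp 2 k : Lp ℂ 2 μH), f⟫ = ∫ x, (starRingEnd ℂ) (fourier k x) * f x ∂μH := by
  rw [L2.inner_def]
  apply integral_congr_ae
  filter_upwards [coeFn_fourierLp 2 k] with x hx
  rw [RCLike.inner_apply, hx, mul_comm]

lemma inner_g (g φ : Lp ℂ 2 μH) (hg : ⇑g =ᵐ[μH] fun x => fourier 1 x * φ x) (k : ℤ) :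
    ⟪(fourierLp 2 k : Lp ℂ 2 μH), g⟫ = ⟪(fourierLp 2 (k - 1) : Lp ℂ 2 μH), φ⟫ := by
  rw [inner_eq_integral, inner_eq_integral]
  apply integral_congr_ae
  filter_upwards [hg] with x hx
  rw [hx]
  have h1 : (starRingEnd ℂ) (fourier k x) = fourier (-k) x := (fourier_neg).symm
  have h2 : (starRingEnd ℂ) (fourier (k - 1) x) = fourier (-(k - 1)) x := (fourier_neg).symm
  rw [h1, h2, ← mul_assoc, ← fourier_add, show -k + 1 = -(k - 1) by ring]

lemma inner_Phi (hβ : 1 < ‖β‖) (ψ : ℂ) (k : ℤ) :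
    ⟪(fourierLp 2 k : Lp ℂ 2 μH), Phi β ψ⟫ =
      if 0 < k then 0 else if k = 0 then ψ else (ψ - 1) * β⁻¹ ^ (-k).toNat := by
  rw [Phi, inner_add_right, inner_smul_right, inner_ff]
  by_cases hk : 0 < k
  · rw [if_pos hk, if_neg (by omega), inner_pos_eq_zero hk (Gl_mem β hβ), mul_zero, add_zero]
  · have hGl : ⟪(fourierLp 2 k : Lp ℂ 2 μH), Gl β⟫ = β⁻¹ ^ (-k).toNat := by
      have h := inner_Gl_neg β hβ (-k).toNat
      rwa [show -(((-k).toNat : ℕ) : ℤ) = k by omega] at h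
    rw [if_neg hk, hGl]
    by_cases h0 : k = 0
    · subst h0
      simp
    · rw [if_neg h0, if_neg h0, add_zero]

lemma eq_of_inner_fourier (f g : Lp ℂ 2 μH)
    (h : ∀ k : ℤ, ⟪(fourierLp 2 k : Lp ℂ 2 μH), f⟫ = ⟪(fourierLp 2 k : Lp ℂ 2 μH), g⟫) :
    f = g := by
  apply fourierBasis.repr.injective
  apply lp.ext
  funext k
  rw [fourierBasis.repr_apply_apply, fourierBasis.repr_apply_apply, coe_fourierBasis]
  exact h k

end CaganAux

open CaganAux in
/-- For `|β| > 1`, the solutions `φ ∈ H₀` of the Cagan equation `φ − β P(zφ|H₀) = 1` are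
exactly the functions `∑_{s≥0} β^{-s} z^{-s}(ψ − β⁻¹z⁻¹)`, `ψ ∈ ℂ`; distinct `ψ` give
distinct solutions, so the solution set is a one-dimensional affine space. -/
theorem cagan_solution_set (β : ℂ) (hβ : 1 < ‖β‖) :
    (∀ φ : Lp ℂ 2 μH,
      (φ ∈ Hardy ∧ ∃ g : Lp ℂ 2 μH, (⇑g =ᵐ[μH] fun x => fourier 1 x * φ x) ∧
        φ - β • ((Hardy.orthogonalProjectionOnto g : Hardy) : Lp ℂ 2 μH) = fourierLp 2 0)
      ↔ ∃ ψ : ℂ, ⇑φ =ᵐ[μH] caganSol β ψ) ∧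
    ∀ ψ₁ ψ₂ : ℂ, caganSol β ψ₁ =ᵐ[μH] caganSol β ψ₂ → ψ₁ = ψ₂ := by
  have hβ0 : β ≠ 0 := beta_ne β hβ
  constructor
  · intro φ
    constructor
    · rintro ⟨hφ, g, hg, heq⟩
      set a : ℤ → ℂ := fun k => @inner ℂ _ _ (fourierLp 2 k : Lp ℂ 2 μH) φ with ha
      refine ⟨a 0, ?_⟩
      have hPg : ∀ k : ℤ, k ≤ 0 →
          (@inner ℂ _ _ (fourierLp 2 k : Lp ℂ 2 μH)
            ((Hardy.orthogonalProjectionOnto g : Hardy) : Lp ℂ 2 μH)) = a (k - 1) := by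
        intro k hk
        have h1 : (↑(Hardy.orthogonalProjectionOnto (fourierLp 2 k)) : Lp ℂ 2 μH) = fourierLp 2 k :=
          Submodule.starProjection_eq_self_iff.mpr (mem_Hardy_fourierLp' hk)
        calc (@inner ℂ _ _ (fourierLp 2 k : Lp ℂ 2 μH)
                ((Hardy.orthogonalProjectionOnto g : Hardy) : Lp ℂ 2 μH))
            = @inner ℂ _ _ (↑(Hardy.orthogonalProjectionOnto (fourierLp 2 k)) : Lp ℂ 2 μH) g :=
              (Submodule.inner_starProjection_left_eq_right Hardy _ _).symm
          _ = @inner ℂ _ _ (fourierLp 2 k : Lp ℂ 2 μH) g := by rw [h1]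
          _ = a (k - 1) := inner_g g φ hg k
      have hEq : ∀ k : ℤ, a k - β * (@inner ℂ _ _ (fourierLp 2 k : Lp ℂ 2 μH)
          ((Hardy.orthogonalProjectionOnto g : Hardy) : Lp ℂ 2 μH)) = if k = 0 then 1 else 0 := by
        intro k
        have h := congrArg
          (fun v : Lp ℂ 2 μH => @inner ℂ _ _ (fourierLp 2 k : Lp ℂ 2 μH) v) heq
        simp only [inner_sub_right, inner_smul_right] at h
        rw [h, inner_ff]
      have hpos : ∀ k : ℤ, 0 < k → a k = 0 := by
        intro k hk
        have h := hEq k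
        rwa [inner_pos_eq_zero hk (Hardy.orthogonalProjectionOnto g).2, if_neg (by omega),
          mul_zero, sub_zero] at h
      have hrec : ∀ k : ℤ, k ≤ 0 → a k - β * a (k - 1) = if k = 0 then 1 else 0 := by
        intro k hk
        rw [← hPg k hk]
        exact hEq k
      have hneg : ∀ n : ℕ, a (-(n : ℤ) - 1) = (a 0 - 1) * β⁻¹ ^ (n + 1) := by
        intro n
        induction n with
        | zero =>
          have h := hrec 0 le_rfl
          rw [if_pos rfl] at h
          rw [show (0:ℤ) - 1 = -1 by norm_num] at h
          rw [show (-((0 : ℕ) : ℤ) - 1) = -1 by norm_num, pow_one]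
          field_simp
          linear_combination -h
        | succ m ih =>
          have h := hrec (-(m : ℤ) - 1) (by omega)
          rw [if_neg (by omega)] at h
          have h3 := sub_eq_zero.mp h
          have h2 : a (-(m : ℤ) - 1 - 1) = β⁻¹ * a (-(m : ℤ) - 1) := by
            rw [h3, inv_mul_cancel_left₀ hβ0]
          have harg : (-((m + 1 : ℕ) : ℤ) - 1) = -(m : ℤ) - 1 - 1 := by push_cast; ring
          rw [harg, h2, ih]
          ring
      have hphi : φ = Phi β (a 0) := by
        apply eq_of_inner_fourier
        intro k
        have hak : @inner ℂ _ _ (fourierLp 2 k : Lp ℂ 2 μH) φ = a k := rfl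
        rw [hak, inner_Phi β hβ (a 0) k]
        by_cases hk : 0 < k
        · rw [if_pos hk]
          exact hpos k hk
        · rw [if_neg hk]
          by_cases h0 : k = 0
          · rw [if_pos h0, h0]
          · rw [if_neg h0]
            have hn := hneg ((-k).toNat - 1)
            have harg : (-((((-k).toNat - 1 : ℕ)) : ℤ) - 1) = k := by omega
            have hexp : ((-k).toNat - 1) + 1 = (-k).toNat := by omega
            rw [harg, hexp] at hn
            exact hn
      rw [hphi]
      exact coeFn_Phi β hβ (a 0)
    · rintro ⟨ψ, hψ⟩
      have hphi : φ = Phi β ψ := Lp.ext (hψ.trans (coeFn_Phi β hβ ψ).symm)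
      refine ⟨by rw [hphi]; exact Phi_mem β hβ ψ,
        ψ • fourierLp 2 1 + ((ψ - 1) * β⁻¹) • Gl β, ?_, ?_⟩
      · filter_upwards [Lp.coeFn_add (ψ • fourierLp 2 1) (((ψ - 1) * β⁻¹) • Gl β),
          Lp.coeFn_smul ψ (fourierLp 2 1), Lp.coeFn_smul ((ψ - 1) * β⁻¹) (Gl β),
          coeFn_fourierLp 2 1, coeFn_Gl β, hψ] with x h1 h2 h3 h4 h5 h6
        rw [h1, Pi.add_apply, h2, h3, Pi.smul_apply, Pi.smul_apply, h4, h5, h6, caganSol_eq β hβ ψ x]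
        have hmul := fourier_mul_Gc β hβ x
        simp only [smul_eq_mul]
        linear_combination (1 - ψ) * hmul
      · have hP1 : Hardy.orthogonalProjectionOnto (fourierLp 2 1) = 0 :=
          Submodule.orthogonalProjectionOnto_eq_zero_iff.mpr (fourierLp_mem_orthogonal one_pos)
        have hPG : (↑(Hardy.orthogonalProjectionOnto (Gl β)) : Lp ℂ 2 μH) = Gl β :=
          Submodule.starProjection_eq_self_iff.mpr (Gl_mem β hβ)
        rw [_root_.map_add, _root_.map_smul, _root_.map_smul, hP1, smul_zero, zero_add, Submodule.coe_smul,
          hPG, hphi, smul_smul, show β * ((ψ - 1) * β⁻¹) = ψ - 1 by field_simp,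
          Phi, add_sub_cancel_left]
  · intro ψ₁ ψ₂ h
    have hP : Phi β ψ₁ = Phi β ψ₂ :=
      Lp.ext ((coeFn_Phi β hβ ψ₁).trans (h.trans (coeFn_Phi β hβ ψ₂).symm))
    have h0 := congrArg
      (fun v : Lp ℂ 2 μH => @inner ℂ _ _ (fourierLp 2 0 : Lp ℂ 2 μH) v) hP
    simpa [inner_Phi β hβ] using h0
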